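/- Let ν be a suitable σ-invariant Borel probability on Ω with continuous IRN J_ν, and let J be any continuous Jacobian on Ω. Then ∫ log J dν ≤ ∫ log J_ν dν. Equivalently, if μ₂ is a suitable probability whose IRN J₂ is a Jacobian, then D_KL(ν, μ₂) = ∫ (log J_ν − log J₂) dν ≥ 0. -/

import Mathlib

open MeasureTheory

/-- The one-sided shift space `Ω = {1,…,d}^ℕ` on `d` symbols,
with the product topology and product σ-algebra. -/
abbrev Omega (d : ℕ) : Type := ℕ → Fin d

/-- The left shift `σ(x₁,x₂,x₃,…) = (x₂,x₃,…)`. -/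
def shift {d : ℕ} (x : Omega d) : Omega d := fun n => x (n + 1)

/-- Prepend a symbol: `cons a x = ax = (a,x₁,x₂,…)`. -/
def cons {d : ℕ} (a : Fin d) (x : Omega d) : Omega d := fun n =>
  match n with
  | 0 => a
  | Nat.succ k => x k

/-- Hölder continuity with respect to the metric
`d(x,y) = 2^{-min{ j : x_j ≠ y_j}}` on `Ω`: there are `C` and `α > 0` such that
whenever `x` and `y` agree on their first `n` coordinates (so `d(x,y) ≤ 2⁻ⁿ`),
`|f x - f y| ≤ C * (2⁻ⁿ)^α`. -/
def IsHolder {d : ℕ} (f : Omega d → ℝ) : Prop :=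
  Continuous f ∧ ∃ C α : ℝ, 0 < α ∧ ∀ (x y : Omega d) (n : ℕ),
    (∀ k < n, x k = y k) → |f x - f y| ≤ C * ((2 : ℝ)⁻¹ ^ n) ^ α

/-- `μ` is a suitable probability with IRN (inverse Radon–Nikodym derivative
along injective branches) `J`: the function `J` is continuous and strictly
positive, and for every symbol `j` and continuous `φ`,
`∫ φ(jx) J(jx) dμ(x) = ∫_{[j]} φ dμ` where `[j] = {x | x₁ = j}`. -/
structure IsSuitable {d : ℕ} (μ : Measure (Omega d)) (J : Omega d → ℝ) : Prop where
  cont : Continuous J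
  pos : ∀ x, 0 < J x
  irn : ∀ (j : Fin d) (φ : Omega d → ℝ), Continuous φ →
    ∫ x, φ (cons j x) * J (cons j x) ∂μ = ∫ x in {x : Omega d | x 0 = j}, φ x ∂μ

/-- `J` is a Jacobian: continuous, strictly positive, and `Σ_a J(ax) = 1`. -/
def IsJacobian {d : ℕ} (J : Omega d → ℝ) : Prop :=
  Continuous J ∧ (∀ x, 0 < J x) ∧ ∀ x : Omega d, ∑ a : Fin d, J (cons a x) = 1

/-- `ν = L*_{log J}(μ)`, the image of `μ` under the dual of the Ruelle operator
of the potential `log J` (note `e^{log J(ax)} = J(ax)`): for every continuous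
`φ`, `∫ φ dν = ∫ L_{log J}φ dμ = ∫ Σ_a J(ax) φ(ax) dμ(x)`. -/
def IsDualRuelle {d : ℕ} (J : Omega d → ℝ) (μ ν : Measure (Omega d)) : Prop :=
  ∀ φ : Omega d → ℝ, Continuous φ →
    ∫ x, φ x ∂ν = ∫ x, ∑ a : Fin d, J (cons a x) * φ (cons a x) ∂μ

/-- `μ` is σ-invariant: `∫ φ∘σ dμ = ∫ φ dμ` for all continuous `φ`. -/
def IsShiftInvariant {d : ℕ} (μ : Measure (Omega d)) : Prop :=
  ∀ φ : Omega d → ℝ, Continuous φ → ∫ x, φ (shift x) ∂μ = ∫ x, φ x ∂μ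

/-- KL divergence `D_KL(μ₁,μ₂) = ∫ (log J₁ − log J₂) dμ₁` of suitable
probabilities, expressed via their IRNs `J₁`, `J₂`. -/
noncomputable def Dkl {d : ℕ} (μ₁ : Measure (Omega d)) (J₁ J₂ : Omega d → ℝ) : ℝ :=
  ∫ x, (Real.log (J₁ x) - Real.log (J₂ x)) ∂μ₁


lemma cont_cons {d : ℕ} (j : Fin d) : Continuous (fun x : Omega d => cons j x) := by
  apply continuous_pi
  intro n
  cases n with
  | zero => exact continuous_const
  | succ k => exact continuous_apply k

lemma cont_integrable {d : ℕ} (ν : Measure (Omega d)) [IsProbabilityMeasure ν]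
    {g : Omega d → ℝ} (hg : Continuous g) : MeasureTheory.Integrable g ν :=
  hg.integrable_of_hasCompactSupport (HasCompactSupport.of_compactSpace g)

/-- nonnegativity of KL divergence: if `ν` is a suitable
σ-invariant probability with continuous IRN `J_ν` and `J` is any continuous
Jacobian, then `∫ log J dν ≤ ∫ log J_ν dν`; equivalently, for a suitable `μ₂`
whose IRN is a Jacobian, `D_KL(ν,μ₂) ≥ 0`. -/
theorem log_jacobian_integral_le
    (d : ℕ) (hd : 2 ≤ d) (Jν J : Omega d → ℝ)
    (ν : Measure (Omega d)) [IsProbabilityMeasure ν]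
    (hν : IsSuitable ν Jν) (hνinv : IsShiftInvariant ν)
    (hJ : IsJacobian J) :
    ∫ x, Real.log (J x) ∂ν ≤ ∫ x, Real.log (Jν x) ∂ν := by
  have hJνc := hν.cont
  have hJνpos := hν.pos
  obtain ⟨hJc, hJpos, hJsum⟩ := hJ
  set f : Omega d → ℝ := fun x => J x / Jν x with hfdef
  have hfc : Continuous f := hJc.div hJνc (fun x => (hJνpos x).ne')
  have hfpos : ∀ x, 0 < f x := fun x => div_pos (hJpos x) (hJνpos x)
  have hIf : Integrable f ν := cont_integrable ν hfc
  have hIlogJ : Integrable (fun x => Real.log (J x)) ν :=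
    cont_integrable ν (hJc.log (fun x => (hJpos x).ne'))
  have hIlogJν : Integrable (fun x => Real.log (Jν x)) ν :=
    cont_integrable ν (hJνc.log (fun x => (hJνpos x).ne'))
  -- measurability of cylinder sets
  have hmeas : ∀ j : Fin d, MeasurableSet {x : Omega d | x 0 = j} := by
    intro j
    have : {x : Omega d | x 0 = j} = (fun x : Omega d => x 0) ⁻¹' {j} := rfl
    rw [this]
    exact (measurable_pi_apply 0) (MeasurableSet.singleton j)
  -- partition lemma
  have hpart : ∑ j : Fin d, ∫ x in {x : Omega d | x 0 = j}, f x ∂ν = ∫ x, f x ∂ν := by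
    have hd : Set.Pairwise (Finset.univ : Finset (Fin d)) (Function.onFun Disjoint
        (fun j => {x : Omega d | x 0 = j})) := by
      intro i _ j _ hij
      refine Set.disjoint_left.2 ?_
      intro x hxi hxj
      exact hij (hxi.symm.trans hxj)
    have hU : (⋃ j ∈ (Finset.univ : Finset (Fin d)), {x : Omega d | x 0 = j}) = Set.univ := by
      ext x; simp
    have := MeasureTheory.integral_biUnion_finset (μ := ν) (f := f)
      (Finset.univ : Finset (Fin d)) (fun j _ => hmeas j) hd
      (fun j _ => hIf.integrableOn)
    rw [hU, MeasureTheory.setIntegral_univ] at this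
    exact this.symm
  -- key: ∫ f dν = 1
  have key : ∫ x, f x ∂ν = 1 := by
    have hirn : ∀ j : Fin d,
        ∫ x, J (cons j x) ∂ν = ∫ x in {x : Omega d | x 0 = j}, f x ∂ν := by
      intro j
      have := hν.irn j f hfc
      have heq : ∀ x : Omega d, f (cons j x) * Jν (cons j x) = J (cons j x) := by
        intro x
        exact div_mul_cancel₀ _ (hJνpos (cons j x)).ne'
      simpa only [heq] using this
    have hsum : ∑ j : Fin d, ∫ x, J (cons j x) ∂ν = 1 := by
      rw [← MeasureTheory.integral_finset_sum]
      · have : ∀ x : Omega d, ∑ j : Fin d, J (cons j x) = 1 := hJsum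
        simp only [this]
        simp
      · intro j _
        exact cont_integrable ν (hJc.comp (cont_cons j))
    calc ∫ x, f x ∂ν = ∑ j : Fin d, ∫ x in {x : Omega d | x 0 = j}, f x ∂ν := hpart.symm
      _ = ∑ j : Fin d, ∫ x, J (cons j x) ∂ν := by
          exact Finset.sum_congr rfl (fun j _ => (hirn j).symm)
      _ = 1 := hsum
  -- pointwise inequality
  have hpt : ∀ x, Real.log (J x) - Real.log (Jν x) ≤ f x - 1 := by
    intro x
    have h1 : Real.log (f x) ≤ f x - 1 := Real.log_le_sub_one_of_pos (hfpos x)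
    rwa [Real.log_div (hJpos x).ne' (hJνpos x).ne'] at h1
  have hmono : ∫ x, (Real.log (J x) - Real.log (Jν x)) ∂ν ≤ ∫ x, (f x - 1) ∂ν :=
    MeasureTheory.integral_mono (hIlogJ.sub hIlogJν) (hIf.sub (integrable_const 1))
      (fun x => hpt x)
  have h2 : ∫ x, (f x - 1) ∂ν = 0 := by
    rw [MeasureTheory.integral_sub hIf (integrable_const 1), key]
    simp
  rw [MeasureTheory.integral_sub hIlogJ hIlogJν, h2] at hmono
  linarith
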